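/- The multivariate Rényi divergence satisfies the data processing inequality under stochastic maps: if T is a stochastic operator (row-stochastic matrix) from alphabet X to alphabet Y, then D_α(p⁰,…,p^d) ≥ D_α(T(p⁰),…,T(p^d)), where orders satisfy ∑ₖ αₖ = 1 with either (i) all αₖ ≥ 0, or (ii) some α_l > 1 and αₖ ≤ 0 for k ≠ l. -/

import Mathlib

open Finset

/-- Multivariate Hölder inequality. -/
lemma holder_aux {ι Z : Type*} [Fintype ι] [Fintype Z] (w : ι → ℝ) (f : ι → Z → ℝ)
    (hw : ∀ i, 0 ≤ w i) (hw1 : ∑ i, w i = 1)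
    (hf : ∀ i x, 0 ≤ f i x) (hF : ∀ i, 0 < ∑ x, f i x) :
    ∑ x, ∏ i, f i x ^ w i ≤ ∏ i, (∑ x, f i x) ^ w i := by
  set F : ι → ℝ := fun i => ∑ x, f i x with hFdef
  have hCpos : 0 < ∏ i, F i ^ w i :=
    prod_pos fun i _ => Real.rpow_pos_of_pos (hF i) _
  have key : ∀ x, ∏ i, (f i x / F i) ^ w i ≤ ∑ i, w i * (f i x / F i) := fun x =>
    Real.geom_mean_le_arith_mean_weighted univ w _ (fun i _ => hw i) hw1
      (fun i _ => div_nonneg (hf i x) (hF i).le)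
  have hrw : ∀ x, ∏ i, (f i x / F i) ^ w i = (∏ i, f i x ^ w i) / ∏ i, F i ^ w i := by
    intro x
    rw [← Finset.prod_div_distrib]
    exact Finset.prod_congr rfl fun i _ => Real.div_rpow (hf i x) (hF i).le _
  have hsum : ∑ x, ∑ i, w i * (f i x / F i) = 1 := by
    rw [Finset.sum_comm]
    have : ∀ i, ∑ x, w i * (f i x / F i) = w i := by
      intro i
      rw [← Finset.mul_sum, ← Finset.sum_div, div_self (hF i).ne', mul_one]
    simp_rw [this]; exact hw1
  have h1 : ∑ x, (∏ i, f i x ^ w i) / ∏ i, F i ^ w i ≤ 1 := by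
    calc ∑ x, (∏ i, f i x ^ w i) / ∏ i, F i ^ w i
        = ∑ x, ∏ i, (f i x / F i) ^ w i := by simp_rw [hrw]
      _ ≤ ∑ x, ∑ i, w i * (f i x / F i) := Finset.sum_le_sum fun x _ => key x
      _ = 1 := hsum
  rw [← Finset.sum_div, div_le_one hCpos] at h1
  exact h1

/-- Reverse Hölder inequality. -/
lemma rev_holder_aux {ι Z : Type*} [Fintype ι] [Fintype Z] [DecidableEq ι]
    (w : ι → ℝ) (g : Z → ℝ) (h : ι → Z → ℝ) (l : ι)
    (hl : 1 < w l) (hneg : ∀ k, k ≠ l → w k ≤ 0) (hw1 : ∑ i, w i = 1)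
    (hg : ∀ x, 0 ≤ g x) (hh : ∀ i x, 0 < h i x) (hF : ∀ i, 0 < ∑ x, g x * h i x) :
    ∏ i, (∑ x, g x * h i x) ^ w i ≤ ∑ x, g x * ∏ i, h i x ^ w i := by
  classical
  set F : ι → ℝ := fun i => ∑ x, g x * h i x with hFdef
  set S : ℝ := ∑ x, g x * ∏ i, h i x ^ w i with hSdef
  have hwl : (0:ℝ) < w l := lt_trans one_pos hl
  have hwl' : w l ≠ 0 := hwl.ne'
  -- S > 0
  have hterm : ∀ x, 0 ≤ g x * ∏ i, h i x ^ w i := fun x =>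
    mul_nonneg (hg x) (prod_nonneg fun i _ => (Real.rpow_pos_of_pos (hh i x) _).le)
  have hgx : ∃ x, 0 < g x := by
    by_contra h'
    push_neg at h'
    have : F l = 0 := by
      rw [hFdef]
      refine Finset.sum_eq_zero fun x _ => ?_
      have : g x = 0 := le_antisymm (h' x) (hg x)
      rw [this, zero_mul]
    exact absurd this (hF l).ne'
  have hS : 0 < S := by
    obtain ⟨x0, hx0⟩ := hgx
    refine Finset.sum_pos' (fun x _ => hterm x) ⟨x0, mem_univ x0, ?_⟩
    exact mul_pos hx0 (prod_pos fun i _ => Real.rpow_pos_of_pos (hh i x0) _)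
  -- weights for forward Hölder
  set v : ι → ℝ := fun i => if i = l then 1 / w l else -w i / w l with hvdef
  have hvl : v l = 1 / w l := if_pos rfl
  have hvk : ∀ k, k ≠ l → v k = -w k / w l := fun k hk => if_neg hk
  have hv : ∀ i, 0 ≤ v i := by
    intro i
    by_cases hi : i = l
    · rw [hi, hvl]; positivity
    · rw [hvk i hi]
      exact div_nonneg (neg_nonneg.2 (hneg i hi)) hwl.le
  have herase : ∑ k ∈ univ.erase l, w k = 1 - w l := by
    have := Finset.add_sum_erase univ w (mem_univ l)
    rw [hw1] at this; linarith
  have hv1 : ∑ i, v i = 1 := by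
    rw [← Finset.add_sum_erase univ v (mem_univ l), hvl,
      Finset.sum_congr rfl fun k hk => hvk k (Finset.ne_of_mem_erase hk)]
    have : ∑ k ∈ univ.erase l, -w k / w l = (-(1 - w l)) / w l := by
      rw [← Finset.sum_div,
        show ∑ k ∈ univ.erase l, -w k = -(1 - w l) by rw [Finset.sum_neg_distrib, herase]]
    rw [this]
    field_simp
    ring
  -- functions for forward Hölder
  set G : ι → Z → ℝ := fun i x => if i = l then g x * ∏ j, h j x ^ w j else g x * h i x
    with hGdef
  have hGl : ∀ x, G l x = g x * ∏ j, h j x ^ w j := fun x => if_pos rfl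
  have hGk : ∀ k, k ≠ l → ∀ x, G k x = g x * h k x := fun k hk x => if_neg hk
  have hGnn : ∀ i x, 0 ≤ G i x := by
    intro i x
    by_cases hi : i = l
    · rw [hi, hGl]; exact hterm x
    · rw [hGk i hi]; exact mul_nonneg (hg x) (hh i x).le
  have hGsuml : ∑ x, G l x = S := by simp_rw [hGl]; rfl
  have hGsumk : ∀ k, k ≠ l → ∑ x, G k x = F k := by
    intro k hk; simp_rw [hGk k hk]; rfl
  have hGsum : ∀ i, 0 < ∑ x, G i x := by
    intro i
    by_cases hi : i = l
    · rw [hi, hGsuml]; exact hS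
    · rw [hGsumk i hi]; exact hF i
  -- pointwise identity
  have hpoint : ∀ x, ∏ i, G i x ^ v i = g x * h l x := by
    intro x
    rcases eq_or_lt_of_le (hg x) with h0 | hgpos
    · -- g x = 0
      rw [Finset.prod_eq_zero (mem_univ l), ← h0, zero_mul]
      rw [hGl, ← h0, zero_mul, Real.zero_rpow]
      rw [hvl]
      positivity
    · have hGpos : ∀ i, 0 < G i x := by
        intro i
        by_cases hi : i = l
        · rw [hi, hGl]
          exact mul_pos hgpos (prod_pos fun j _ => Real.rpow_pos_of_pos (hh j x) _)
        · rw [hGk i hi]; exact mul_pos hgpos (hh i x)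
      have hprodpos : 0 < ∏ i, G i x ^ v i :=
        prod_pos fun i _ => Real.rpow_pos_of_pos (hGpos i) _
      have hlog : Real.log (∏ i, G i x ^ v i) = ∑ i, v i * Real.log (G i x) := by
        rw [Real.log_prod (fun i _ => (Real.rpow_pos_of_pos (hGpos i) _).ne')]
        exact Finset.sum_congr rfl fun i _ => Real.log_rpow (hGpos i) _
      have hlogG : ∀ i, Real.log (G i x)
          = Real.log (g x) + (if i = l then ∑ j, w j * Real.log (h j x)
              else Real.log (h i x)) := by
        intro i
        by_cases hi : i = l
        · rw [hi, hGl, if_pos rfl, Real.log_mul hgpos.ne' , Real.log_prod]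
          · congr 1
            exact Finset.sum_congr rfl fun j _ => Real.log_rpow (hh j x) _
          · exact fun j _ => (Real.rpow_pos_of_pos (hh j x) _).ne'
          · exact (prod_pos fun j _ => Real.rpow_pos_of_pos (hh j x) _).ne'
        · rw [if_neg hi, hGk i hi, Real.log_mul hgpos.ne' (hh i x).ne']
      have hsum : ∑ i, v i * Real.log (G i x)
          = Real.log (g x) + Real.log (h l x) := by
        simp_rw [hlogG, mul_add]
        rw [Finset.sum_add_distrib, ← Finset.sum_mul, hv1, one_mul]
        congr 1
        rw [← Finset.add_sum_erase univ
          (fun i => v i * if i = l then ∑ j, w j * Real.log (h j x)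
            else Real.log (h i x)) (mem_univ l)]
        simp only [if_pos rfl, if_true]
        have e1 : ∑ k ∈ univ.erase l, (v k * if k = l then ∑ j, w j * Real.log (h j x)
            else Real.log (h k x)) = ∑ k ∈ univ.erase l, -w k / w l * Real.log (h k x) := by
          refine Finset.sum_congr rfl fun k hk => ?_
          rw [if_neg (Finset.ne_of_mem_erase hk), hvk k (Finset.ne_of_mem_erase hk)]
        rw [e1, hvl, ← Finset.add_sum_erase univ (fun j => w j * Real.log (h j x))
          (mem_univ l)]
        have e2 : ∑ k ∈ univ.erase l, -w k / w l * Real.log (h k x)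
            = -(∑ k ∈ univ.erase l, w k * Real.log (h k x)) / w l := by
          have e3 : -(∑ k ∈ univ.erase l, w k * Real.log (h k x)) / w l
              = ∑ k ∈ univ.erase l, -(w k * Real.log (h k x)) / w l := by
            rw [← Finset.sum_neg_distrib, Finset.sum_div]
          rw [e3]
          exact Finset.sum_congr rfl fun k _ => by ring
        rw [e2]
        field_simp
        ring
      rw [← Real.exp_log hprodpos, hlog, hsum, Real.exp_add, Real.exp_log hgpos,
        Real.exp_log (hh l x)]
  -- forward Hölder applied to G with weights v
  have holder := holder_aux v G hv hv1 hGnn hGsum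
  have hFl : F l ≤ S ^ (1 / w l) * ∏ k ∈ univ.erase l, F k ^ (-w k / w l) := by
    have lhs_eq : ∑ x, ∏ i, G i x ^ v i = F l := by simp_rw [hpoint]; rfl
    have rhs_eq : ∏ i, (∑ x, G i x) ^ v i
        = S ^ (1 / w l) * ∏ k ∈ univ.erase l, F k ^ (-w k / w l) := by
      rw [← Finset.mul_prod_erase univ (fun i => (∑ x, G i x) ^ v i) (mem_univ l),
        hGsuml, hvl]
      congr 1
      refine Finset.prod_congr rfl fun k hk => ?_
      have hk' := Finset.ne_of_mem_erase hk
      rw [hGsumk k hk', hvk k hk']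
    calc F l = ∑ x, ∏ i, G i x ^ v i := lhs_eq.symm
      _ ≤ ∏ i, (∑ x, G i x) ^ v i := holder
      _ = _ := rhs_eq
  have step : F l ^ w l ≤ S * ∏ k ∈ univ.erase l, F k ^ (-w k) := by
    calc F l ^ w l
        ≤ (S ^ (1 / w l) * ∏ k ∈ univ.erase l, F k ^ (-w k / w l)) ^ w l :=
          Real.rpow_le_rpow (hF l).le hFl hwl.le
      _ = S * ∏ k ∈ univ.erase l, F k ^ (-w k) := by
          rw [Real.mul_rpow (Real.rpow_nonneg hS.le _)
            (prod_nonneg fun k _ => Real.rpow_nonneg (hF k).le _),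
            ← Real.rpow_mul hS.le, one_div_mul_cancel hwl', Real.rpow_one,
            ← Real.finset_prod_rpow _ _ (fun k _ => Real.rpow_nonneg (hF k).le _) _]
          congr 1
          refine Finset.prod_congr rfl fun k _ => ?_
          rw [← Real.rpow_mul (hF k).le, div_mul_cancel₀ _ hwl']
  rw [← Finset.mul_prod_erase univ (fun i => F i ^ w i) (mem_univ l)]
  have hEpos : 0 ≤ ∏ k ∈ univ.erase l, F k ^ w k :=
    prod_nonneg fun k _ => Real.rpow_nonneg (hF k).le _
  calc F l ^ w l * ∏ k ∈ univ.erase l, F k ^ w k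
      ≤ (S * ∏ k ∈ univ.erase l, F k ^ (-w k)) * ∏ k ∈ univ.erase l, F k ^ w k :=
        mul_le_mul_of_nonneg_right step hEpos
    _ = S := by
        rw [mul_assoc, ← Finset.prod_mul_distrib]
        have e4 : ∏ k ∈ univ.erase l, F k ^ (-w k) * F k ^ w k
            = ∏ _k ∈ univ.erase l, (1:ℝ) := by
          refine Finset.prod_congr rfl fun k _ => ?_
          rw [← Real.rpow_add (hF k), neg_add_cancel, Real.rpow_zero]
        rw [e4, Finset.prod_const_one, mul_one]

lemma prod_rpow_mul_eq {ι : Type*} [Fintype ι] (w : ι → ℝ) (hw1 : ∑ i, w i = 1)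
    (a : ℝ) (ha : 0 ≤ a) (h : ι → ℝ) (hh : ∀ i, 0 < h i) :
    ∏ i, (a * h i) ^ w i = a * ∏ i, h i ^ w i := by
  rcases eq_or_lt_of_le ha with h0 | hpos
  · obtain ⟨i0, hi0⟩ : ∃ i, w i ≠ 0 := by
      by_contra h'
      push_neg at h'
      rw [Finset.sum_congr rfl fun i _ => h' i, Finset.sum_const_zero] at hw1
      norm_num at hw1
    rw [← h0, Finset.prod_eq_zero (mem_univ i0), zero_mul]
    rw [zero_mul, Real.zero_rpow hi0]
  · simp_rw [Real.mul_rpow hpos.le (hh _).le]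
    rw [Finset.prod_mul_distrib, ← Real.rpow_sum_of_pos hpos, hw1, Real.rpow_one]


/-- Data processing inequality for the multivariate Rényi divergence under
a stochastic operator `t` (with `t y x = t(y|x)` a conditional PMF on `Y`
for each `x`). Orders sum to 1 and satisfy either (i) all `α k ≥ 0`, or
(ii) some `α l > 1` and `α k ≤ 0` for `k ≠ l`. -/
theorem multivariate_renyi_dpi
    {X Y : Type*} [Fintype X] [Fintype Y] [Nonempty X] [Nonempty Y] (d : ℕ)
    (p : Fin (d + 1) → X → ℝ) (α : Fin (d + 1) → ℝ) (αstar : ℝ)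
    (t : Y → X → ℝ)
    (hp_pos : ∀ k x, 0 < p k x) (hp_sum : ∀ k, ∑ x, p k x = 1)
    (ht_nonneg : ∀ y x, 0 ≤ t y x) (ht_sum : ∀ x, ∑ y, t y x = 1)
    (hq_pos : ∀ k y, 0 < ∑ x, t y x * p k x)
    (hα_sum : ∑ k, α k = 1)
    (hα_cond : (∀ k, 0 ≤ α k) ∨
      (∃ l, 1 < α l ∧ ∀ k, k ≠ l → α k ≤ 0))
    (hαstar_ub : ∀ k, α k ≤ αstar) (hαstar_mem : ∃ k, α k = αstar)
    (hαstar_ne : αstar ≠ 1) :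
    (1 / (αstar - 1)) * Real.log (∑ y, ∏ k, (∑ x, t y x * p k x) ^ (α k)) ≤
      (1 / (αstar - 1)) * Real.log (∑ x, ∏ k, (p k x) ^ (α k)) := by
  classical
  set A : ℝ := ∑ y, ∏ k, (∑ x, t y x * p k x) ^ (α k) with hAdef
  set B : ℝ := ∑ x, ∏ k, (p k x) ^ (α k) with hBdef
  have hA : 0 < A :=
    Finset.sum_pos (fun y _ => prod_pos fun k _ => Real.rpow_pos_of_pos (hq_pos k y) _)
      univ_nonempty
  have hB : 0 < B :=
    Finset.sum_pos (fun x _ => prod_pos fun k _ => Real.rpow_pos_of_pos (hp_pos k x) _)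
      univ_nonempty
  have hptw : ∀ y x, ∏ k, (t y x * p k x) ^ α k = t y x * ∏ k, p k x ^ α k :=
    fun y x => prod_rpow_mul_eq α hα_sum (t y x) (ht_nonneg y x) (fun k => p k x)
      (fun k => hp_pos k x)
  have hswap : ∑ y, ∑ x, ∏ k, (t y x * p k x) ^ α k = B := by
    simp_rw [hptw]
    rw [Finset.sum_comm]
    refine Finset.sum_congr rfl fun x _ => ?_
    rw [← Finset.sum_mul, ht_sum, one_mul]
  rcases hα_cond with hcase | ⟨l, hl1, hlneg⟩
  · -- case (i): all α k ≥ 0, so αstar < 1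
    have hast : αstar < 1 := by
      obtain ⟨k0, hk0⟩ := hαstar_mem
      have h1 : αstar ≤ ∑ k, α k := by
        rw [← hk0]
        exact Finset.single_le_sum (fun k _ => hcase k) (mem_univ k0)
      rw [hα_sum] at h1
      exact lt_of_le_of_ne h1 hαstar_ne
    have hBA : B ≤ A := by
      rw [← hswap]
      refine Finset.sum_le_sum fun y _ => ?_
      exact holder_aux α (fun k x => t y x * p k x) hcase hα_sum
        (fun k x => mul_nonneg (ht_nonneg y x) (hp_pos k x).le) (fun k => hq_pos k y)
    have hlog : Real.log B ≤ Real.log A := Real.log_le_log hB hBA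
    have hc : 1 / (αstar - 1) ≤ 0 := by
      apply le_of_lt
      apply div_neg_of_pos_of_neg one_pos
      linarith
    exact mul_le_mul_of_nonpos_left hlog hc
  · -- case (ii)
    have hast : 1 < αstar := lt_of_lt_of_le hl1 (hαstar_ub l)
    have hAB : A ≤ B := by
      rw [← hswap]
      refine Finset.sum_le_sum fun y _ => ?_
      have := rev_holder_aux α (fun x => t y x) (fun k x => p k x) l hl1 hlneg hα_sum
        (fun x => ht_nonneg y x) (fun k x => hp_pos k x) (fun k => hq_pos k y)
      calc ∏ k, (∑ x, t y x * p k x) ^ α k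
          ≤ ∑ x, t y x * ∏ k, p k x ^ α k := this
        _ = ∑ x, ∏ k, (t y x * p k x) ^ α k := by
            refine Finset.sum_congr rfl fun x _ => (hptw y x).symm
    have hlog : Real.log A ≤ Real.log B := Real.log_le_log hA hAB
    have hc : 0 ≤ 1 / (αstar - 1) := le_of_lt (div_pos one_pos (by linarith))
    exact mul_le_mul_of_nonneg_left hlog hc
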